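/- A semidirected graph N (with undirected edge set E_U and directed edge set E_D) is acyclic if and only if the undirected graph induced by its undirected edges E_U is a forest, and the directed graph obtained by contracting every undirected edge of N is acyclic. -/

import Mathlib

open Relation

/-- A semidirected graph: a set of undirected edges and a set of directed edges. -/
structure SDG (V : Type) where
  undir : Finset (Sym2 V)
  dir : Finset (V × V)

namespace SDG

variable {V : Type} [DecidableEq V]

/-- one step along a directed edge -/
def dstep (N : SDG V) (u v : V) : Prop := (u, v) ∈ N.dir

/-- one step along an undirected edge -/
def ustep (N : SDG V) (u v : V) : Prop := s(u, v) ∈ N.undir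

/-- one step of a semidirected path -/
def sstep (N : SDG V) (u v : V) : Prop := N.dstep u v ∨ N.ustep u v

/-- directed reachability (existence of a directed path) -/
def dreach (N : SDG V) : V → V → Prop := ReflTransGen N.dstep

/-- reachability using undirected edges only -/
def ureach (N : SDG V) : V → V → Prop := ReflTransGen N.ustep

/-- semidirected reachability (existence of a semidirected path) -/
def sreach (N : SDG V) : V → V → Prop := ReflTransGen N.sstep

/-- `M` is obtained from `N` by directing some of the undirected edges of `N`
(each such edge receiving exactly one direction). -/
def Directs (N M : SDG V) : Prop :=
  M.undir ⊆ N.undir ∧ N.dir ⊆ M.dir ∧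
    (∀ e ∈ M.dir, e ∉ N.dir → s(e.1, e.2) ∈ N.undir ∧ s(e.1, e.2) ∉ M.undir) ∧
    (∀ p ∈ N.undir, p ∉ M.undir →
      ∃! e : V × V, e ∈ M.dir ∧ e ∉ N.dir ∧ s(e.1, e.2) = p)

/-- a semidirected graph is directed when it has no undirected edges -/
def IsDirected (N : SDG V) : Prop := N.undir = ∅

/-- existence of a directed cycle -/
def HasDirCycle (N : SDG V) : Prop := ∃ e ∈ N.dir, N.dreach e.2 e.1

/-- `N` is acyclic if no compatible directed graph (obtained by directing all
undirected edges) has a directed cycle. -/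
def Acyclic (N : SDG V) : Prop :=
  ∀ G : SDG V, Directs N G → G.IsDirected → ¬ G.HasDirCycle

/-- in-degree: number of incoming directed edges -/
def ideg (N : SDG V) (v : V) : ℕ := (N.dir.filter fun e => e.2 = v).card

/-- out-degree: number of outgoing directed edges -/
def odeg (N : SDG V) (v : V) : ℕ := (N.dir.filter fun e => e.1 = v).card

/-- number of incident undirected edges -/
def udeg (N : SDG V) (v : V) : ℕ := (N.undir.filter fun p => v ∈ p).card

/-- total degree -/
def deg (N : SDG V) (v : V) : ℕ := N.ideg v + N.odeg v + N.udeg v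

/-- hybrid edges: directed edges whose child is a hybrid node (in-degree ≥ 2) -/
def hybridEdges (N : SDG V) : Finset (V × V) := N.dir.filter fun e => 2 ≤ N.ideg e.2

/-- no self-loops, and no undirected edge parallel to a directed edge -/
def Proper (N : SDG V) : Prop :=
  (∀ p ∈ N.undir, ¬ p.IsDiag) ∧ (∀ e ∈ N.dir, e.1 ≠ e.2) ∧
    ∀ e ∈ N.dir, s(e.1, e.2) ∉ N.undir

/-- `M` is phylogenetically compatible with `N`: `M` is an SDAG obtained from
`N` by directing some undirected edges, keeping the same hybrid edges. -/
def PhyloCompat (M N : SDG V) : Prop :=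
  Directs N M ∧ M.Acyclic ∧ M.hybridEdges = N.hybridEdges

/-- a rooted partner of `N`: a DAG phylogenetically compatible with `N` -/
def RootedPartner (G N : SDG V) : Prop := PhyloCompat G N ∧ G.IsDirected

/-- a network: an SDAG admitting a rooted partner -/
def IsNetwork (N : SDG V) : Prop := N.Acyclic ∧ ∃ G : SDG V, RootedPartner G N

/-- mutual semidirected reachability (same undirected component) -/
def sim (N : SDG V) (u v : V) : Prop := N.sreach u v ∧ N.sreach v u

/-- `v` lies in a root component: its undirected component is maximal for the
semidirected-path preorder -/
def InRootComp (N : SDG V) (v : V) : Prop := ∀ u, N.sreach u v → N.sreach v u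

/-- the undirected simple graph induced by the undirected edges -/
def undirGraph (N : SDG V) : SimpleGraph V :=
  SimpleGraph.fromEdgeSet (N.undir : Set (Sym2 V))

/-- leaf in some rooted partner -/
def IsUnrootedLeaf (N : SDG V) (v : V) : Prop :=
  ∃ G : SDG V, RootedPartner G N ∧ G.odeg v = 0

/-- leaf in every rooted partner -/
def IsRootedLeaf (N : SDG V) (v : V) : Prop :=
  ∀ G : SDG V, RootedPartner G N → G.odeg v = 0

/-- a leaf-labeled network: a network whose unrooted leaves are all rooted leaves
(so that its leaf set is stable across rooted partners and can be labeled) -/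
def LNetwork (N : SDG V) : Prop :=
  IsNetwork N ∧ ∀ v, IsUnrootedLeaf N v → IsRootedLeaf N v

/-- `l` is (the list of nodes of) a directed path from `u` to `v` in `G` -/
def IsDPathList (G : SDG V) (u v : V) (l : List V) : Prop :=
  l.head? = some u ∧ l.getLast? = some v ∧ l.Chain' G.dstep

/-- the number of directed paths from `u` to `v` -/
noncomputable def pathCount (G : SDG V) (u v : V) : ℕ :=
  Set.ncard {l : List V | IsDPathList G u v l}

/-- the set of directed paths starting at `v` -/
def startPaths (G : SDG V) (v : V) : Set (List V) :=
  {l : List V | l.head? = some v ∧ l.Chain' G.dstep}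

/-- a root choice function: picks one node in each root component, constant on
root components, and the identity outside of root components -/
def RootChoice (N : SDG V) (ρ : V → V) : Prop :=
  (∀ v, InRootComp N v → sim N v (ρ v) ∧ ∀ u, InRootComp N u → sim N u v → ρ u = ρ v) ∧
    ∀ v, ¬ InRootComp N v → ρ v = v

/-- `G` is the rooted partner of `N` whose set of roots (in-degree 0 nodes) is the
image of the root choice function `ρ` -/
def PartnerFor (N : SDG V) (ρ : V → V) (G : SDG V) : Prop :=
  RootedPartner G N ∧ {v | G.ideg v = 0} = ρ '' {v | InRootComp N v}

-- the directional μ-vector of `(u, v)`: path counts from `v` to each node in any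
-- rooted partner directing the edge `uv` as `(u, v)`
open Classical in
noncomputable def muD (N : SDG V) (u v : V) : V → ℕ :=
  if h : ∃ G : SDG V, RootedPartner G N ∧ (u, v) ∈ G.dir then
    fun x => pathCount h.choose v x
  else fun _ => 0

-- the root μ-vector of the root component of `t`
open Classical in
noncomputable def muR (N : SDG V) (t : V) : V → ℕ :=
  if h : ∃ p : (V → V) × SDG V, RootChoice N p.1 ∧ PartnerFor N p.1 p.2 then
    fun x => pathCount h.choose.2 (h.choose.1 t) x
  else fun _ => 0

/-- a DAG is tree-child if every non-leaf node has a tree-node child -/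
def TreeChildDAG (G : SDG V) : Prop :=
  ∀ v, 0 < G.odeg v → ∃ w, (v, w) ∈ G.dir ∧ G.ideg w ≤ 1

/-- all rooted partners are tree-child -/
def StronglyTreeChild (N : SDG V) : Prop :=
  ∀ G : SDG V, RootedPartner G N → TreeChildDAG G

/-- some rooted partner is tree-child -/
def WeaklyTreeChild (N : SDG V) : Prop :=
  ∃ G : SDG V, RootedPartner G N ∧ TreeChildDAG G

/-- coordinatewise comparison of μ-vectors over the leaves of `N` -/
def muLE (N : SDG V) (m m' : V → ℕ) : Prop :=
  ∀ x, IsUnrootedLeaf N x → m x ≤ m' x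

/-- incomparability of μ-vectors (over the leaves of `N`) -/
def muIncomp (N : SDG V) (m m' : V → ℕ) : Prop :=
  ¬ muLE N m m' ∧ ¬ muLE N m' m

/-- a network is complete when every undirected edge lies in a root component
(equivalently, it equals its completion) -/
def Complete (N : SDG V) : Prop := ∀ p ∈ N.undir, ∀ v ∈ p, InRootComp N v

/-- reachability by a tree path (directed path whose edges are all tree edges) -/
def treeReach (G : SDG V) : V → V → Prop :=
  ReflTransGen fun a b => (a, b) ∈ G.dir ∧ G.ideg b ≤ 1

/-- `v` has a tree descendant leaf -/
def HasTreeDescLeaf (G : SDG V) (v : V) : Prop := ∃ x, G.odeg x = 0 ∧ treeReach G v x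

/-- `l` is an elementary path from `u` to `v`: a directed path whose first node
has out-degree 1 and whose intermediate nodes have in- and out-degree 1 -/
def IsElemPathList (G : SDG V) (u v : V) (l : List V) : Prop :=
  l.head? = some u ∧ l.getLast? = some v ∧ l.Chain' G.dstep ∧ 2 ≤ l.length ∧
    G.odeg u = 1 ∧ ∀ w ∈ (l.drop 1).dropLast, G.ideg w = 1 ∧ G.odeg w = 1

/-- an elementary node: a tree node with out-degree = total degree = 1, or
out-degree < total degree = 2 -/
def IsElemNode (G : SDG V) (v : V) : Prop :=
  G.ideg v ≤ 1 ∧ ((G.odeg v = 1 ∧ G.deg v = 1) ∨ (G.odeg v < G.deg v ∧ G.deg v = 2))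

/-- the setoid identifying nodes connected by undirected edges -/
def usetoid (N : SDG V) : Setoid V :=
  ⟨Relation.EqvGen N.ustep, Relation.EqvGen.is_equivalence _⟩

/-- the edge relation of the contraction of `N`: the directed graph on the
quotient by undirected connectivity, with the directed edges of `N` -/
def crel (N : SDG V) (x y : Quotient N.usetoid) : Prop :=
  ∃ u v : V, (u, v) ∈ N.dir ∧ Quotient.mk N.usetoid u = x ∧ Quotient.mk N.usetoid v = y


section AcyclicAux

variable {V : Type} [DecidableEq V]

private abbrev mkq (N : SDG V) (v : V) : Quotient N.usetoid := Quotient.mk N.usetoid v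

private lemma mkq_eq_of_ustep {N : SDG V} {a b : V} (h : N.ustep a b) : mkq N a = mkq N b :=
  Quotient.sound (Relation.EqvGen.rel _ _ h)

private lemma mk_eta (d : V × V) : s(d.1, d.2) = Sym2.mk.uncurry d := by rfl

private lemma sym2_pair_eq {d d' : V × V} (h : Sym2.mk.uncurry d = Sym2.mk.uncurry d') :
    d' = d ∨ d' = (d.2, d.1) := by
  obtain ⟨x, y⟩ := d; obtain ⟨x', y'⟩ := d'
  rw [Function.uncurry_apply_pair, Function.uncurry_apply_pair, Sym2.eq_iff] at h
  rcases h with ⟨h1, h2⟩ | ⟨h1, h2⟩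
  · left; rw [h1, h2]
  · right; rw [h1, h2]

/-- blue edges of an orientation `G`: directed edges not coming from `N.dir` -/
private def Blue (N G : SDG V) (x y : V) : Prop := (x, y) ∈ G.dir ∧ (x, y) ∉ N.dir

private lemma blue_mem_undir {N G : SDG V} (hd : N.Directs G) {x y : V}
    (h : Blue N G x y) : s(x, y) ∈ N.undir := (hd.2.2.1 (x, y) h.1 h.2).1

private lemma blue_ne {N G : SDG V} (hP : N.Proper) (hd : N.Directs G) {x y : V}
    (h : Blue N G x y) : x ≠ y := by
  intro he
  subst he
  exact hP.1 _ (blue_mem_undir hd h) (Sym2.mk_isDiag_iff.2 rfl)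

private lemma blue_unique {N G : SDG V} (hd : N.Directs G) (hu : G.IsDirected)
    {x y x' y' : V} (h : Blue N G x y) (h' : Blue N G x' y')
    (he : s(x, y) = s(x', y')) : (x, y) = ((x', y') : V × V) := by
  have hp : s(x, y) ∈ N.undir := blue_mem_undir hd h
  have hnot : s(x, y) ∉ G.undir := by rw [hu]; exact Finset.notMem_empty _
  obtain ⟨e, _, hun⟩ := hd.2.2.2 _ hp hnot
  have h1 := hun (x, y) ⟨h.1, h.2, rfl⟩
  have h2 := hun (x', y') ⟨h'.1, h'.2, he.symm⟩
  rw [h1, h2]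

private lemma rtg_crel_of_dstep {N G : SDG V} (hd : N.Directs G) : ∀ {a b : V},
    ReflTransGen G.dstep a b → ReflTransGen (crel N) (mkq N a) (mkq N b) := by
  intro a b h
  induction h with
  | refl => exact .refl
  | @tail b c h1 h2 ih =>
    by_cases hr : (b, c) ∈ N.dir
    · exact ih.tail ⟨b, c, hr, rfl, rfl⟩
    · have : mkq N b = mkq N c := mkq_eq_of_ustep (blue_mem_undir hd ⟨h2, hr⟩)
      rwa [← this]

private lemma find_red {N G : SDG V} : ∀ {a b : V}, ReflTransGen G.dstep a b →
    ReflTransGen (Blue N G) a b ∨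
      ∃ x y, (x, y) ∈ N.dir ∧ ReflTransGen G.dstep a x ∧ ReflTransGen G.dstep y b := by
  intro a b h
  induction h with
  | refl => exact Or.inl .refl
  | @tail b c h1 h2 ih =>
    by_cases hr : (b, c) ∈ N.dir
    · exact Or.inr ⟨b, c, hr, h1, .refl⟩
    · rcases ih with hb | ⟨x, y, hxy, ha, hb⟩
      · exact Or.inl (hb.tail ⟨h2, hr⟩)
      · exact Or.inr ⟨x, y, hxy, ha, hb.tail h2⟩

private lemma adj_ustep {N : SDG V} {u x : V} (h : N.undirGraph.Adj u x) : N.ustep u x := by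
  rw [undirGraph, SimpleGraph.fromEdgeSet_adj] at h
  exact Finset.mem_coe.mp h.1

private lemma ustep_adj {N : SDG V} (hP : N.Proper) {u x : V} (h : N.ustep u x) :
    N.undirGraph.Adj u x := by
  rw [undirGraph, SimpleGraph.fromEdgeSet_adj]
  refine ⟨Finset.mem_coe.mpr h, fun he => ?_⟩
  subst he
  exact hP.1 _ h (Sym2.mk_isDiag_iff.2 rfl)

private lemma reachable_of_eqvGen {N : SDG V} (hP : N.Proper) {a b : V}
    (h : Relation.EqvGen N.ustep a b) : N.undirGraph.Reachable a b := by
  induction h with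
  | rel x y h => exact (ustep_adj hP h).reachable
  | refl x => exact .refl x
  | symm _ _ _ ih => exact ih.symm
  | trans _ _ _ _ _ ih1 ih2 => exact ih1.trans ih2

private lemma reach_of_walk {N : SDG V} (S : Set (V × V)) :
    ∀ {u v : V} (w : N.undirGraph.Walk u v), (∀ d ∈ w.darts, d.toProd ∈ S) →
      ReflTransGen (fun x y => (x, y) ∈ S) u v := by
  intro u v w
  induction w with
  | nil => exact fun _ => .refl
  | @cons u x v h p ih =>
    intro hD
    refine .head ?_ (ih ?_)
    · exact hD ⟨(u, x), h⟩ (by simp [SimpleGraph.Walk.darts_cons])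
    · intro d hdm
      exact hD d (by simp [SimpleGraph.Walk.darts_cons, hdm])

private lemma dart_class {N : SDG V} : ∀ {u v : V} (w : N.undirGraph.Walk u v),
    ∀ d ∈ w.darts, mkq N d.toProd.1 = mkq N u ∧ mkq N d.toProd.2 = mkq N u := by
  intro u v w
  induction w with
  | nil => intro d hd; simp at hd
  | @cons u x v h p ih =>
    intro d hd
    rw [SimpleGraph.Walk.darts_cons] at hd
    have hux : mkq N u = mkq N x := mkq_eq_of_ustep (adj_ustep h)
    rcases List.mem_cons.mp hd with rfl | hd
    · exact ⟨rfl, hux.symm⟩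
    · obtain ⟨h1, h2⟩ := ih d hd
      rw [← hux] at h1 h2
      exact ⟨h1, h2⟩

/-- a good set of darts: each dart an undirected edge of `N`, no two darts with the
same underlying edge -/
private def GoodD (N : SDG V) (D : Set (V × V)) : Prop :=
  (∀ d ∈ D, Sym2.mk.uncurry d ∈ N.undir) ∧ ∀ d ∈ D, ∀ d' ∈ D, Sym2.mk.uncurry d = Sym2.mk.uncurry d' → d = d'

private lemma goodD_union {N : SDG V} {D₁ D₂ : Set (V × V)} (h₁ : GoodD N D₁)
    (h₂ : GoodD N D₂) (hdisj : ∀ d₁ ∈ D₁, ∀ d₂ ∈ D₂, Sym2.mk.uncurry d₁ ≠ Sym2.mk.uncurry d₂) :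
    GoodD N (D₁ ∪ D₂) := by
  constructor
  · rintro d (hd | hd)
    · exact h₁.1 d hd
    · exact h₂.1 d hd
  · rintro d (hd | hd) d' (hd' | hd') he
    · exact h₁.2 d hd d' hd' he
    · exact absurd he (hdisj d hd d' hd')
    · exact absurd he.symm (hdisj d' hd' d hd)
    · exact h₂.2 d hd d' hd' he

/-- orienting all undirected edges, using the directions in `D` -/
private lemma orient {N : SDG V} (hP : N.Proper) (D : Set (V × V)) (hD : GoodD N D) :
    ∃ G : SDG V, N.Directs G ∧ G.IsDirected ∧ ∀ d ∈ D, d ∈ G.dir := by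
  classical
  have hrep : ∀ p : Sym2 V, ∃ ab : V × V, Sym2.mk.uncurry ab = p :=
    fun p => Sym2.ind (fun x y => ⟨(x, y), rfl⟩) p
  set o : Sym2 V → V × V :=
    fun p => if h : ∃ d, d ∈ D ∧ Sym2.mk.uncurry d = p then h.choose else (hrep p).choose with ho
  have hmk : ∀ p, Sym2.mk.uncurry (o p) = p := by
    intro p
    by_cases h : ∃ d, d ∈ D ∧ Sym2.mk.uncurry d = p
    · simp only [ho, dif_pos h]; exact h.choose_spec.2
    · simp only [ho, dif_neg h]; exact (hrep p).choose_spec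
  have hOD : ∀ d ∈ D, o (Sym2.mk.uncurry d) = d := by
    intro d hd
    have h : ∃ d', d' ∈ D ∧ Sym2.mk.uncurry d' = Sym2.mk.uncurry d := ⟨d, hd, rfl⟩
    simp only [ho, dif_pos h]
    exact hD.2 _ h.choose_spec.1 _ hd h.choose_spec.2
  have hnotdir : ∀ p ∈ N.undir, o p ∉ N.dir := by
    intro p hp hmem
    exact hP.2.2 (o p) hmem (by rw [mk_eta, hmk]; exact hp)
  refine ⟨⟨∅, N.dir ∪ N.undir.image o⟩, ⟨?_, ?_, ?_, ?_⟩, rfl, ?_⟩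
  · exact Finset.empty_subset _
  · exact Finset.subset_union_left
  · intro e he hne
    rcases Finset.mem_union.mp he with he | he
    · exact absurd he hne
    · obtain ⟨p, hp, hpe⟩ := Finset.mem_image.mp he
      subst hpe
      refine ⟨by rw [mk_eta, hmk]; exact hp, Finset.notMem_empty _⟩
  · intro p hp _
    refine ⟨o p, ⟨Finset.mem_union_right _ (Finset.mem_image.mpr ⟨p, hp, rfl⟩),
      hnotdir p hp, by rw [mk_eta, hmk]⟩, ?_⟩
    rintro e ⟨he, hnd, hmke⟩
    rcases Finset.mem_union.mp he with he | he
    · exact absurd he hnd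
    · obtain ⟨q, hq, hqe⟩ := Finset.mem_image.mp he
      subst hqe
      rw [mk_eta, hmk] at hmke
      rw [hmke]
  · intro d hd
    exact Finset.mem_union_right _
      (Finset.mem_image.mpr ⟨Sym2.mk.uncurry d, hD.1 d hd, hOD d hd⟩)

/-- a good dart set realizing an undirected path between two vertices of the
same undirected component -/
private lemma exists_path_D {N : SDG V} (hP : N.Proper) {a u : V} (h : mkq N a = mkq N u) :
    ∃ D : Set (V × V), GoodD N D ∧ (∀ d ∈ D, mkq N d.1 = mkq N a ∧ mkq N d.2 = mkq N a) ∧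
      ReflTransGen (fun x y => (x, y) ∈ D) a u := by
  have hr : N.undirGraph.Reachable a u := reachable_of_eqvGen hP (Quotient.exact h)
  obtain ⟨w⟩ := hr
  obtain ⟨p, hp⟩ := w.toPath
  refine ⟨{d | ∃ dr ∈ p.darts, dr.toProd = d}, ⟨?_, ?_⟩, ?_, ?_⟩
  · rintro d ⟨dr, hdr, rfl⟩
    rw [← mk_eta]
    exact adj_ustep dr.adj
  · rintro d ⟨dr, hdr, rfl⟩ d' ⟨dr', hdr', rfl⟩ he
    have hnd : p.edges.Nodup := hp.edges_nodup
    have : dr = dr' :=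
      List.inj_on_of_nodup_map (f := SimpleGraph.Dart.edge) hnd hdr hdr' he
    rw [this]
  · rintro d ⟨dr, hdr, rfl⟩
    exact dart_class p dr hdr
  · exact reach_of_walk _ p (fun d hd => ⟨d, hd, rfl⟩)

private def ReachWith (N : SDG V) (D : Set (V × V)) (a b : V) : Prop :=
  ReflTransGen (fun x y => (x, y) ∈ N.dir ∨ (x, y) ∈ D) a b

/-- realizing a simple quotient path by a good dart set -/
private lemma chain_D {N : SDG V} (hP : N.Proper) :
    ∀ (L : List (Quotient N.usetoid)) (b : V) (q' : Quotient N.usetoid),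
      List.Chain (crel N) (mkq N b) (L ++ [q']) → (mkq N b :: L).Nodup →
      ∃ (D : Set (V × V)) (b' : V), GoodD N D ∧
        (∀ d ∈ D, mkq N d.1 ∈ mkq N b :: L ∧ mkq N d.2 ∈ mkq N b :: L) ∧
        mkq N b' = q' ∧ ReachWith N D b b' := by
  intro L
  induction L with
  | nil =>
    intro b q' hch _
    rw [List.nil_append] at hch; replace hch := List.chain_cons.mp hch
    obtain ⟨⟨u, v, hdir, hu, hv⟩, -⟩ := hch
    have hu' : mkq N u = mkq N b := hu
    have hv' : mkq N v = q' := hv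
    obtain ⟨D, good, cls, reach⟩ := exists_path_D hP hu'.symm
    refine ⟨D, v, good, ?_, hv', ?_⟩
    · intro d hd
      obtain ⟨h1, h2⟩ := cls d hd
      exact ⟨by rw [h1]; exact List.mem_singleton_self _,
        by rw [h2]; exact List.mem_singleton_self _⟩
    · exact (ReflTransGen.mono (fun x y h => Or.inr h) _ _ reach).tail (Or.inl hdir)
  | cons c L' ih =>
    intro b q' hch hnd
    rw [List.cons_append] at hch; replace hch := List.chain_cons.mp hch
    obtain ⟨⟨u, v, hdir, hu, hv⟩, hch'⟩ := hch
    have hu' : mkq N u = mkq N b := hu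
    have hv' : mkq N v = c := hv
    obtain ⟨D₁, good₁, cls₁, reach₁⟩ := exists_path_D hP hu'.symm
    rw [← hv'] at hch'
    have hnd'' : (c :: L').Nodup := hnd.of_cons
    rw [← hv'] at hnd''
    obtain ⟨D₂, b', good₂, cls₂, hb', reach₂⟩ := ih v q' hch' hnd''
    have hbnot : mkq N b ∉ c :: L' := (List.nodup_cons.mp hnd).1
    have hdisj : ∀ d₁ ∈ D₁, ∀ d₂ ∈ D₂, Sym2.mk.uncurry d₁ ≠ Sym2.mk.uncurry d₂ := by
      intro d₁ hd₁ d₂ hd₂ he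
      have hc2 : mkq N d₂.1 ∈ c :: L' := by
        have := (cls₂ d₂ hd₂).1
        rwa [hv'] at this
      have hc1 : mkq N d₂.1 = mkq N b := by
        rcases sym2_pair_eq he with h | h
        · rw [h]; exact (cls₁ d₁ hd₁).1
        · rw [h]; exact (cls₁ d₁ hd₁).2
      rw [hc1] at hc2
      exact hbnot hc2
    refine ⟨D₁ ∪ D₂, b', goodD_union good₁ good₂ hdisj, ?_, hb', ?_⟩
    · rintro d (hd | hd)
      · obtain ⟨h1, h2⟩ := cls₁ d hd
        exact ⟨by rw [h1]; exact List.mem_cons_self, by rw [h2]; exact List.mem_cons_self⟩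
      · obtain ⟨h1, h2⟩ := cls₂ d hd
        rw [hv'] at h1 h2
        exact ⟨List.mem_cons_of_mem _ h1, List.mem_cons_of_mem _ h2⟩
    · have r1 : ReachWith N (D₁ ∪ D₂) b u :=
        ReflTransGen.mono (fun x y h => Or.inr (Or.inl h)) _ _ reach₁
      have r2 : ReachWith N (D₁ ∪ D₂) v b' :=
        ReflTransGen.mono (fun x y h => h.imp id Or.inr) _ _ reach₂
      exact (r1.tail (Or.inl hdir)).trans r2

private lemma getLast?_append_right {α : Type} (l l' : List α) (h : l' ≠ []) :
    (l ++ l').getLast? = l'.getLast? := by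
  rw [List.getLast?_append, List.getLast?_eq_getLast h]
  rfl

private lemma exists_nodup_chain_aux {α : Type} (r : α → α → Prop) :
    ∀ (n : ℕ) (l : List α) (a : α), l.length ≤ n → List.Chain r a l →
      ∃ l' : List α, List.Chain r a l' ∧ (a :: l').getLast? = (a :: l).getLast? ∧
        (a :: l').Nodup ∧ l' ⊆ l := by
  intro n
  induction n with
  | zero =>
    intro l a hl _
    rw [List.length_eq_zero_iff.mp (Nat.le_zero.mp hl)]
    exact ⟨[], List.Chain.nil, rfl, List.nodup_singleton a, fun x hx => hx⟩
  | succ m ih =>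
    intro l a hl hch
    by_cases ha : a ∈ l
    · obtain ⟨s, t, rfl⟩ := List.append_of_mem ha
      have hcht : List.Chain r a t := (List.isChain_cons_split.mp hch).2
      have hlt : t.length ≤ m := by
        have := List.length_append (as := s) (bs := a :: t) ▸ hl
        simp [List.length_append] at hl
        omega
      obtain ⟨l', h1, h2, h3, h4⟩ := ih t a hlt hcht
      refine ⟨l', h1, ?_, h3, fun x hx => List.mem_append_right s (List.mem_cons_of_mem a (h4 hx))⟩
      rw [h2]
      have : a :: (s ++ a :: t) = (a :: s) ++ (a :: t) := by simp
      rw [this, getLast?_append_right _ _ (List.cons_ne_nil _ _)]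
    · cases l with
      | nil => exact ⟨[], List.Chain.nil, rfl, List.nodup_singleton a, fun x hx => hx⟩
      | cons x t =>
        obtain ⟨hax, hcht⟩ := List.chain_cons.mp hch
        have hlt : t.length ≤ m := by simpa using hl
        obtain ⟨l', h1, h2, h3, h4⟩ := ih t x hlt hcht
        refine ⟨x :: l', List.chain_cons.mpr ⟨hax, h1⟩, ?_, ?_, ?_⟩
        · rw [List.getLast?_cons_cons, h2, List.getLast?_cons_cons]
        · rw [List.nodup_cons]
          refine ⟨fun hmem => ?_, h3⟩
          rcases List.mem_cons.mp hmem with rfl | hmem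
          · exact ha (List.mem_cons_self)
          · exact ha (List.mem_cons_of_mem _ (h4 hmem))
        · intro z hz
          rcases List.mem_cons.mp hz with rfl | hz
          · exact List.mem_cons_self
          · exact List.mem_cons_of_mem _ (h4 hz)

private lemma exists_nodup_chain {α : Type} {r : α → α → Prop} {a b : α}
    (h : ReflTransGen r a b) :
    ∃ l, List.Chain r a l ∧ (a :: l).getLast? = some b ∧ (a :: l).Nodup := by
  obtain ⟨l, hch, hlast⟩ := List.exists_isChain_cons_of_relationReflTransGen h
  obtain ⟨l', h1, h2, h3, _⟩ := exists_nodup_chain_aux r l.length l a le_rfl hch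
  refine ⟨l', h1, ?_, h3⟩
  rw [h2, List.getLast?_eq_getLast (List.cons_ne_nil _ _), hlast]

private lemma avoid_reach {N G : SDG V} (hP : N.Proper) (hd : N.Directs G)
    (hu : G.IsDirected) {a b : V} (hab : Blue N G a b) :
    ∀ (m : List V) (x z : V), List.Chain (Blue N G) x m → (x :: m).getLast? = some z →
      (∀ s t, x :: m ≠ s ++ a :: b :: t) →
      (N.undirGraph \ SimpleGraph.fromEdgeSet {s(a, b)}).Reachable x z := by
  intro m
  induction m with
  | nil =>
    intro x z _ hlast _
    have : z = x := by simpa using hlast.symm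
    rw [this]
  | cons y m' ih =>
    intro x z hch hlast hpat
    obtain ⟨hxy, hch'⟩ := List.chain_cons.mp hch
    have hadj : (N.undirGraph \ SimpleGraph.fromEdgeSet {s(a, b)}).Adj x y := by
      rw [SimpleGraph.sdiff_adj]
      refine ⟨ustep_adj hP (blue_mem_undir hd hxy), fun hcon => ?_⟩
      rw [SimpleGraph.fromEdgeSet_adj] at hcon
      have heq : s(x, y) = s(a, b) := Set.mem_singleton_iff.mp hcon.1
      have hpair : (x, y) = ((a, b) : V × V) := blue_unique hd hu hxy hab heq
      have hx : x = a := congrArg Prod.fst hpair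
      have hy : y = b := congrArg Prod.snd hpair
      exact hpat [] m' (by rw [hx, hy]; rfl)
    have hrest := ih y z hch'
      (by rw [List.getLast?_cons_cons] at hlast; exact hlast)
      (fun s t heq => hpat (x :: s) t (by rw [heq]; rfl))
    exact hadj.reachable.trans hrest

end AcyclicAux

theorem statement_0 {V : Type} [DecidableEq V] (N : SDG V) (hP : N.Proper) :
    N.Acyclic ↔
      N.undirGraph.IsAcyclic ∧
        ∀ x y : Quotient N.usetoid, crel N x y → ¬ ReflTransGen (crel N) y x := by
  constructor
  · intro hA
    constructor
    · -- the undirected part is a forest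
      by_contra hcyc
      obtain ⟨v, c, hc⟩ : ∃ (v : V) (c : N.undirGraph.Walk v v), c.IsCycle := by
        by_contra h'
        push_neg at h'
        exact hcyc fun v c => h' v c
      have good : GoodD N {d | ∃ dr ∈ c.darts, dr.toProd = d} := by
        constructor
        · rintro d ⟨dr, hdr, rfl⟩
          rw [← mk_eta]
          exact adj_ustep dr.adj
        · rintro d ⟨dr, hdr, rfl⟩ d' ⟨dr', hdr', rfl⟩ he
          have hnd : c.edges.Nodup := hc.edges_nodup
          have : dr = dr' :=
            List.inj_on_of_nodup_map (f := SimpleGraph.Dart.edge) hnd hdr hdr' he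
          rw [this]
      obtain ⟨G, hdir, hisdir, hDsub⟩ := orient hP _ good
      cases c with
      | nil => exact hc.ne_nil rfl
      | @cons _ w _ h q =>
        refine hA G hdir hisdir ⟨(v, w), ?_, ?_⟩
        · exact hDsub _ ⟨⟨(v, w), h⟩, by simp [SimpleGraph.Walk.darts_cons], rfl⟩
        · have hqd : ∀ d ∈ q.darts, d.toProd ∈ {d : V × V | d ∈ G.dir} := by
            intro d hd
            exact hDsub _ ⟨d, by simp [SimpleGraph.Walk.darts_cons, hd], rfl⟩
          exact ReflTransGen.mono (fun x y hxy => hxy) _ _ (reach_of_walk _ q hqd)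
    · -- the contraction is acyclic
      intro x y hxy hyx
      obtain ⟨u₀, v₀, h₀, hu₀, hv₀⟩ := hxy
      have hu₀' : mkq N u₀ = x := hu₀
      have hv₀' : mkq N v₀ = y := hv₀
      obtain ⟨l, hch, hlast, hnd⟩ := exists_nodup_chain hyx
      by_cases hl : l = []
      · subst hl
        have hyx' : y = x := by simpa using hlast
        obtain ⟨D, good, _, reach⟩ := exists_path_D hP
          (show mkq N v₀ = mkq N u₀ by rw [hu₀', hv₀', hyx'])
        obtain ⟨G, hdir, hisdir, hDsub⟩ := orient hP D good
        refine hA G hdir hisdir ⟨(u₀, v₀), hdir.2.1 h₀, ?_⟩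
        exact ReflTransGen.mono (fun p q hpq => hDsub _ hpq) _ _ reach
      · have hld : l.dropLast ++ [l.getLast hl] = l := List.dropLast_append_getLast hl
        have hxlast : l.getLast hl = x := by
          have h1 : (y :: l).getLast? = l.getLast? := by
            cases l with
            | nil => exact absurd rfl hl
            | cons s t => exact List.getLast?_cons_cons
          rw [h1, List.getLast?_eq_getLast hl] at hlast
          exact Option.some.inj hlast
        set M := l.dropLast with hM
        rw [hxlast] at hld
        have hch2 : List.Chain (crel N) (mkq N v₀) (M ++ [x]) := by
          rw [hv₀', hld]
          exact hch
        have hnd2 : (mkq N v₀ :: M).Nodup := by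
          rw [hv₀']
          exact hnd.sublist ((List.dropLast_sublist l).cons₂ y)
        have hxnot : x ∉ y :: M := by
          have heq2 : (y :: M) ++ [x] = y :: l := by rw [← hld]; rfl
          have hnd3 : ((y :: M) ++ [x]).Nodup := by rw [heq2]; exact hnd
          rw [List.nodup_append'] at hnd3
          exact fun hmem => hnd3.2.2 hmem (List.mem_singleton_self x)
        obtain ⟨D₂, b', good₂, cls₂, hb', reach₂⟩ := chain_D hP M v₀ x hch2 hnd2
        obtain ⟨D₃, good₃, cls₃, reach₃⟩ := exists_path_D hP
          (show mkq N b' = mkq N u₀ by rw [hb', hu₀'])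
        have hdisj : ∀ d₂ ∈ D₂, ∀ d₃ ∈ D₃, Sym2.mk.uncurry d₂ ≠ Sym2.mk.uncurry d₃ := by
          intro d₂ hd₂ d₃ hd₃ he
          have h31 : mkq N d₃.1 = mkq N b' := (cls₃ d₃ hd₃).1
          rcases sym2_pair_eq he with hh | hh
          · have hx1 : mkq N d₂.1 = x := by rw [← hh, h31, hb']
            have hmem := (cls₂ d₂ hd₂).1
            rw [hx1, hv₀'] at hmem
            exact hxnot hmem
          · rw [hh] at h31
            have hx1 : mkq N d₂.2 = x := by rw [← hb']; exact h31
            have hmem := (cls₂ d₂ hd₂).2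
            rw [hx1, hv₀'] at hmem
            exact hxnot hmem
        obtain ⟨G, hdir, hisdir, hDsub⟩ := orient hP _ (goodD_union good₂ good₃ hdisj)
        refine hA G hdir hisdir ⟨(u₀, v₀), hdir.2.1 h₀, ?_⟩
        have r2 : ReflTransGen G.dstep v₀ b' :=
          ReflTransGen.mono (fun p q hpq => hpq.elim (fun h => hdir.2.1 h) (fun h => hDsub _ (Or.inl h))) _ _ reach₂
        have r3 : ReflTransGen G.dstep b' u₀ :=
          ReflTransGen.mono (fun p q hpq => hDsub _ (Or.inr hpq)) _ _ reach₃
        exact r2.trans r3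
  · rintro ⟨hforest, hq⟩ G hdir hisdir hdc
    obtain ⟨e, heG, hreach⟩ := hdc
    by_cases hered : e ∈ N.dir
    · have h1 : crel N (mkq N e.1) (mkq N e.2) :=
        ⟨e.1, e.2, by rwa [Prod.mk.eta], rfl, rfl⟩
      exact hq _ _ h1 (rtg_crel_of_dstep hdir hreach)
    · have heB : Blue N G e.1 e.2 := ⟨by rwa [Prod.mk.eta], by rwa [Prod.mk.eta]⟩
      have hcls : mkq N e.1 = mkq N e.2 := mkq_eq_of_ustep (blue_mem_undir hdir heB)
      rcases find_red (N := N) hreach with hblue | ⟨a', b', hred, har, hbrr⟩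
      · -- the closed walk uses only newly directed edges
        classical
        obtain ⟨l₁, hch₁, hlast₁⟩ := List.exists_isChain_cons_of_relationReflTransGen hblue
        have hP0 : ∃ n, ∃ (a : V) (l : List V), l ≠ [] ∧ List.Chain (Blue N G) a l ∧
            (a :: l).getLast? = some a ∧ l.length = n := by
          refine ⟨(e.2 :: l₁).length, e.1, e.2 :: l₁, List.cons_ne_nil _ _,
            List.chain_cons.mpr ⟨heB, hch₁⟩, ?_, rfl⟩
          rw [List.getLast?_cons_cons, List.getLast?_eq_getLast (List.cons_ne_nil _ _), hlast₁]
        obtain ⟨a, l, hne, hchm, hlastm, hlen⟩ := Nat.find_spec hP0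
        cases l with
        | nil => exact hne rfl
        | cons b rest =>
          obtain ⟨hab, hch'⟩ := List.chain_cons.mp hchm
          have hnopat : ∀ s t, b :: rest ≠ s ++ a :: b :: t := by
            intro s t heq
            have hsuff : (a :: b :: t) <:+ (a :: b :: rest) := ⟨a :: s, by rw [List.cons_append, heq]⟩
            have hch2' : List.Chain' (Blue N G) (a :: b :: t) :=
              List.IsChain.suffix (show List.Chain' _ (a :: b :: rest) from hchm) hsuff
            have hch2 : List.Chain (Blue N G) a (b :: t) := hch2'
            have hlast2 : (a :: b :: t).getLast? = some a := by
              have h1 : (a :: b :: rest).getLast? = some a := hlastm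
              rw [show a :: b :: rest = (a :: s) ++ (a :: b :: t) from by rw [heq, List.cons_append],
                getLast?_append_right _ _ (List.cons_ne_nil _ _)] at h1
              exact h1
            have hlt : (b :: t).length < Nat.find hP0 := by
              have hlength := congrArg List.length heq
              rw [← hlen]
              simp only [List.length_cons, List.length_append] at hlength ⊢
              omega
            exact Nat.find_min hP0 hlt ⟨a, b :: t, List.cons_ne_nil _ _, hch2, hlast2, rfl⟩
          have hlast' : (b :: rest).getLast? = some a := by
            rw [← List.getLast?_cons_cons (a := a)]
            exact hlastm
          have hreachdel := avoid_reach hP hdir hisdir hab rest b a hch' hlast' hnopat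
          have hadj : N.undirGraph.Adj a b := ustep_adj hP (blue_mem_undir hdir hab)
          have hbr := SimpleGraph.isAcyclic_iff_forall_adj_isBridge.mp hforest hadj
          rw [SimpleGraph.isBridge_iff] at hbr
          exact hbr hreachdel.symm
      · have c1 : crel N (mkq N a') (mkq N b') := ⟨a', b', hred, rfl, rfl⟩
        apply hq _ _ c1
        have r1 := rtg_crel_of_dstep hdir hbrr
        have r2 := rtg_crel_of_dstep hdir har
        rw [hcls] at r1
        exact r1.trans r2

end SDG
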